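/- Let d ∈ (0,1), α > −d, k ≥ 1, and let a₁,…,a_k be positive reals with a_i > (k+1−i)·d for each i. Fix 1 ≤ j ≤ k and a nonnegative integer B (playing the role of b̄_{j−1}). Then the iterated sum ∑_{b_j ≥ 1} ⋯ ∑_{b_k ≥ 1} ∏_{i=j}^{k} ( (α/d + B + b_j + ⋯ + b_{i−1})_{(b_i)} / ( (a_i+α)/d + B + b_j + ⋯ + b_{i−1} )_{(b_i)} ) converges and equals (α/d + B)_{(k−j+1)} / ∏_{i=j}^{k} ( a_i/d − (k+1−i) ). -/

import Mathlib

open MeasureTheory Finset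

/-- Rising factorial `(x)_{(n)} = ∏_{j=0}^{n-1} (x+j)`. -/
noncomputable def risingFactorial (x : ℝ) (n : ℕ) : ℝ := ∏ j ∈ Finset.range n, (x + j)

/-- Beta function `B(a,b) = Γ(a)Γ(b)/Γ(a+b)`. -/
noncomputable def betaFn (a b : ℝ) : ℝ := Real.Gamma a * Real.Gamma b / Real.Gamma (a + b)

/-- The partition of `{1,…,n}` induced by an allocation vector `z ∈ (ℕ₊)ⁿ`:
its blocks are the nonempty level sets `{i : z_i = j}`. -/
def Cz {n : ℕ} (z : Fin n → ℕ+) : Finset (Finset (Fin n)) :=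
  Finset.image (fun i => Finset.univ.filter fun i' => z i' = z i) Finset.univ

/-- `m(z) = max {z₁,…,zₙ}`. -/
def mz {n : ℕ} (z : Fin n → ℕ+) : ℕ := Finset.univ.sup fun i => (z i : ℕ)

/-- `g_j(z) = #{i : z_i ≥ j}`. -/
def gz {n : ℕ} (z : Fin n → ℕ+) (j : ℕ) : ℕ :=
  (Finset.univ.filter fun i => j ≤ (z i : ℕ)).card

/-- Access the `j`-th coordinate (1-indexed) of a vector `v : Fin m → ℝ`. -/
noncomputable def stk {m : ℕ} (v : Fin m → ℝ) (j : ℕ) : ℝ :=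
  if h : j - 1 < m then v ⟨j - 1, h⟩ else 0

/-- `C` is a partition of `{1,…,n}`: all blocks are nonempty and every element
belongs to exactly one block. -/
def IsPartition {n : ℕ} (C : Finset (Finset (Fin n))) : Prop :=
  (∀ c ∈ C, c.Nonempty) ∧ ∀ i : Fin n, ∃! c, c ∈ C ∧ i ∈ c


section RFAux
open Filter

lemma rf_zero (x : ℝ) : risingFactorial x 0 = 1 := by simp [risingFactorial]

lemma rf_succ (x : ℝ) (n : ℕ) : risingFactorial x (n+1) = risingFactorial x n * (x + n) := by
  simp [risingFactorial, Finset.prod_range_succ]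

lemma rf_succ' (x : ℝ) (n : ℕ) : risingFactorial x (n+1) = x * risingFactorial (x+1) n := by
  induction n with
  | zero => simp [risingFactorial]
  | succ n ih => rw [rf_succ, ih, rf_succ]; push_cast; ring

lemma rf_add (x : ℝ) (m n : ℕ) :
    risingFactorial x (m + n) = risingFactorial x m * risingFactorial (x + m) n := by
  induction n with
  | zero => simp [risingFactorial]
  | succ n ih => rw [← Nat.add_assoc, rf_succ, ih, rf_succ]; push_cast; ring

lemma rf_pos {x : ℝ} (hx : 0 < x) (n : ℕ) : 0 < risingFactorial x n :=
  Finset.prod_pos fun j _ => by positivity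

lemma rf_nonneg {x : ℝ} (hx : 0 ≤ x) (n : ℕ) : 0 ≤ risingFactorial x n :=
  Finset.prod_nonneg fun j _ => by positivity

lemma rf_ratio (y : ℝ) (hy : 0 < y) (N : ℕ) :
    risingFactorial y N / risingFactorial (y+1) N = y / (y + N) := by
  have h1 : risingFactorial y N * (y + N) = y * risingFactorial (y+1) N := by
    rw [← rf_succ, rf_succ']
  have h2 : 0 < risingFactorial (y+1) N := rf_pos (by linarith) N
  field_simp
  linarith [h1]


lemma factor_bound (y v : ℝ) (hy : 0 < y) (hv : y < v) (m : ℕ) (hm : 1 ≤ m * (v - y)) (l : ℕ) :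
    ((y + l) / (v + l)) ^ m ≤ (y + l) / (y + 1 + l) := by
  have hd : (0:ℝ) < v - y := sub_pos.mpr hv
  have hyl : (0:ℝ) < y + l := by positivity
  have hvl : (0:ℝ) < v + l := by
    have : (0:ℝ) ≤ (l:ℝ) := Nat.cast_nonneg l
    linarith
  have hb : (1 + 1/(y+l) : ℝ) ≤ (1 + (v-y)/(y+l)) ^ m := by
    calc (1 + 1/(y+l) : ℝ) ≤ 1 + m * ((v-y)/(y+l)) := by
          rw [mul_div_assoc']
          gcongr
      _ ≤ (1 + (v-y)/(y+l)) ^ m := by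
          refine one_add_mul_le_pow ?_ m
          have : (0:ℝ) ≤ (v-y)/(y+l) := by positivity
          linarith
  have key : (y + 1 + l)/(y + l) ≤ ((v + l)/(y + l)) ^ m := by
    have e1 : (v + l)/(y+l) = 1 + (v-y)/(y+l) := by field_simp; ring
    have e2 : (y + 1 + l)/(y+l) = 1 + 1/(y+l) := by field_simp; ring
    rw [e1, e2]; exact hb
  have h1 : ((y+l)/(v+l))^m = (((v+l)/(y+l))^m)⁻¹ := by rw [← inv_pow, inv_div]
  have h2 : ((y+1+l)/(y+l))⁻¹ = (y+l)/(y+1+l) := inv_div _ _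
  rw [h1, ← h2]
  exact inv_anti₀ (by positivity) key


lemma rf_pow_bound (y v : ℝ) (hy : 0 < y) (hv : y < v) (m : ℕ) (hm : 1 ≤ m * (v - y)) (N : ℕ) :
    (risingFactorial y N / risingFactorial v N) ^ m ≤ y / (y + N) := by
  have e : (risingFactorial y N / risingFactorial v N) ^ m
      = ∏ l ∈ Finset.range N, ((y + l) / (v + l)) ^ m := by
    rw [risingFactorial, risingFactorial, ← Finset.prod_div_distrib, ← Finset.prod_pow]
  rw [e, ← rf_ratio y hy N]
  have e2 : risingFactorial y N / risingFactorial (y+1) N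
      = ∏ l ∈ Finset.range N, ((y + l) / (y + 1 + l)) := by
    rw [risingFactorial, risingFactorial, ← Finset.prod_div_distrib]
  rw [e2]
  refine Finset.prod_le_prod (fun l _ => ?_) fun l _ => factor_bound y v hy hv m hm l
  have hl := Nat.cast_nonneg (α := ℝ) l
  apply pow_nonneg; apply div_nonneg <;> linarith

lemma tendsto_rf_ratio (y v : ℝ) (hy : 0 < y) (hv : y < v) :
    Tendsto (fun N => risingFactorial y N / risingFactorial v N) atTop (nhds 0) := by
  set m : ℕ := ⌈(v - y)⁻¹⌉₊ + 1 with hmdef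
  have hd : (0:ℝ) < v - y := sub_pos.mpr hv
  have hm : 1 ≤ (m:ℝ) * (v - y) := by
    have h1 : (v-y)⁻¹ ≤ (m:ℝ) := by
      have := Nat.le_ceil (v-y)⁻¹
      push_cast [hmdef]
      linarith
    calc (1:ℝ) = (v-y)⁻¹ * (v-y) := by field_simp
      _ ≤ (m:ℝ) * (v-y) := by gcongr
  have hm0 : (m:ℝ) ≠ 0 := by positivity
  have hbound : ∀ N, risingFactorial y N / risingFactorial v N ≤ (y / (y + N)) ^ ((m:ℝ)⁻¹) := by
    intro N
    have hA : 0 ≤ risingFactorial y N / risingFactorial v N := by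
      have := rf_pos hy N; have := rf_pos (lt_trans hy hv) N; positivity
    have : risingFactorial y N / risingFactorial v N
        = (((risingFactorial y N / risingFactorial v N) ^ m) ^ ((m:ℝ)⁻¹) : ℝ) := by
      rw [← Real.rpow_natCast _ m, ← Real.rpow_mul hA, mul_inv_cancel₀ hm0, Real.rpow_one]
    rw [this]
    exact Real.rpow_le_rpow (by positivity) (rf_pow_bound y v hy hv m hm N) (by positivity)
  have hg : Tendsto (fun N : ℕ => (y / (y + N)) ^ ((m:ℝ)⁻¹)) atTop (nhds 0) := by
    have h1 : Tendsto (fun N : ℕ => y / (y + N)) atTop (nhds 0) := by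
      have h2 : Tendsto (fun N : ℕ => y + (N:ℝ)) atTop atTop :=
        tendsto_atTop_add_const_left _ _ tendsto_natCast_atTop_atTop
      simpa [div_eq_mul_inv] using h2.inv_tendsto_atTop.const_mul y
    have := h1.rpow_const (p := (m:ℝ)⁻¹) (Or.inr (by positivity))
    rwa [Real.zero_rpow (by positivity)] at this
  refine squeeze_zero (fun N => ?_) hbound hg
  have := rf_pos hy N; have := rf_pos (lt_trans hy hv) N; positivity


lemma hasSum_C' (y v : ℝ) (hy : 0 ≤ y) (hv : y < v) :
    HasSum (fun c : ℕ => risingFactorial y c / risingFactorial v (c+1)) (1/(v-y)) := by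
  have hv0 : 0 < v := lt_of_le_of_lt hy hv
  rcases eq_or_lt_of_le hy with hy0 | hy0
  · -- y = 0
    have hzero : ∀ c : ℕ, c ≠ 0 → risingFactorial y c / risingFactorial v (c+1) = 0 := by
      intro c hc
      obtain ⟨c', rfl⟩ := Nat.exists_eq_succ_of_ne_zero hc
      have : risingFactorial y (c'+1) = 0 := by
        rw [← hy0, risingFactorial]
        apply Finset.prod_eq_zero (Finset.mem_range.mpr (Nat.succ_pos c'))
        simp
      rw [this, zero_div]
    have h := hasSum_single (f := fun c : ℕ => risingFactorial y c / risingFactorial v (c+1))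
      0 (fun c hc => hzero c hc)
    simpa [rf_zero, rf_succ, rf_zero, ← hy0] using h
  · -- y > 0
    set t : ℕ → ℝ := fun c => risingFactorial y c / risingFactorial v (c+1) with ht
    have htnn : ∀ c, 0 ≤ t c := fun c =>
      div_nonneg (rf_nonneg hy c) (le_of_lt (rf_pos hv0 (c+1)))
    have hpartial : ∀ N, ∑ c ∈ Finset.range N, t c
        = (1 - risingFactorial y N / risingFactorial v N)/(v-y) := by
      intro N
      induction N with
      | zero => simp [rf_zero]
      | succ N ih =>
        rw [Finset.sum_range_succ, ih]
        have h1 : 0 < risingFactorial v N := rf_pos hv0 N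
        have h2 : 0 < risingFactorial v (N+1) := rf_pos hv0 (N+1)
        have hvy : v - y ≠ 0 := by intro h; nlinarith [sub_pos.mpr hv]
        rw [ht]
        simp only
        rw [rf_succ y N, rf_succ v N]
        have hvN : (0:ℝ) < v + N := by have := Nat.cast_nonneg (α := ℝ) N; linarith
        rw [rf_succ v N] at h2
        field_simp
        ring
    have hsummable : Summable t := by
      apply summable_of_sum_range_le htnn (c := 1/(v-y))
      intro N
      rw [hpartial N]
      have hA : 0 ≤ risingFactorial y N / risingFactorial v N :=
        div_nonneg (rf_nonneg hy N) (le_of_lt (rf_pos hv0 N))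
      have : (0:ℝ) < v - y := sub_pos.mpr hv
      rw [div_le_div_iff₀ this this]
      nlinarith
    rw [hsummable.hasSum_iff_tendsto_nat]
    have := (tendsto_rf_ratio y v hy0 hv).const_sub 1
    simp only [hpartial]
    have h2 := this.div_const (v - y)
    simpa using h2


lemma hasSum_C (x v : ℝ) (hx : -1 < x) (hv : x + 1 < v) :
    HasSum (fun b : ℕ+ => risingFactorial x b / risingFactorial v b) (x / (v - x - 1)) := by
  rw [← Equiv.hasSum_iff Equiv.pnatEquivNat.symm]
  have key : ∀ c : ℕ, (fun b : ℕ+ => risingFactorial x b / risingFactorial v b)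
      (Equiv.pnatEquivNat.symm c)
      = x * (risingFactorial (x+1) c / risingFactorial v (c+1)) := by
    intro c
    have hc : ((Equiv.pnatEquivNat.symm c : ℕ+) : ℕ) = c + 1 := rfl
    simp only [hc, rf_succ' x c, mul_div_assoc]
  have h := (hasSum_C' (x+1) v (by linarith) (by linarith)).mul_left x
  have hx1 : x * (1 / (v - (x+1))) = x / (v - x - 1) := by
    rw [mul_one_div]; ring_nf
  rw [hx1] at h
  exact h.congr_fun fun c => key c

lemma hasSum_C_shift (x v : ℝ) (m : ℕ) (hx : -1 < x) (hv : x + m + 1 < v) :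
    HasSum (fun b : ℕ+ => risingFactorial x b * risingFactorial (x + b) m / risingFactorial v b)
      (risingFactorial x (m+1) / (v - x - m - 1)) := by
  have hxm : (-1:ℝ) < x + m := by
    have := Nat.cast_nonneg (α := ℝ) m; linarith
  have h := (hasSum_C (x + m) v hxm (by linarith)).mul_left (risingFactorial x m)
  have e1 : risingFactorial x m * ((x + m) / (v - (x + m) - 1))
      = risingFactorial x (m+1) / (v - x - m - 1) := by
    rw [rf_succ]; rw [mul_div_assoc]; ring_nf
  rw [e1] at h
  refine h.congr_fun fun b => ?_
  have e2 : risingFactorial x (b:ℕ) * risingFactorial (x + b) m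
      = risingFactorial x m * risingFactorial (x + m) (b:ℕ) := by
    rw [← rf_add, ← rf_add, Nat.add_comm]
  simp only [mul_div_assoc]
  rw [← mul_div_assoc, e2, mul_div_assoc]


def consEquiv (m : ℕ) : ℕ+ × (Fin m → ℕ+) ≃ (Fin (m+1) → ℕ+) where
  toFun p := Fin.cons p.1 p.2
  invFun b := (b 0, fun i => b i.succ)
  left_inv p := by simp
  right_inv b := Fin.cons_self_tail b

lemma sum_filter_lt_succ {m : ℕ} (f : Fin (m+1) → ℝ) (i : Fin m) :
    ∑ l ∈ Finset.univ.filter (fun l => l < i.succ), f l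
      = f 0 + ∑ l ∈ Finset.univ.filter (fun l => l < i), f l.succ := by
  rw [Finset.sum_filter, Finset.sum_filter, Fin.sum_univ_succ]
  simp [Fin.succ_pos, Fin.succ_lt_succ_iff]

lemma sum_filter_lt_zero {m : ℕ} (f : Fin (m+1) → ℝ) :
    ∑ l ∈ Finset.univ.filter (fun l => l < (0 : Fin (m+1))), f l = 0 := by
  simp

lemma main_fin (m : ℕ) (u : ℝ) (hu : -1 < u) (w : Fin m → ℝ)
    (hw : ∀ i : Fin m, (m:ℝ) - (i:ℕ) < w i) :
    HasSum
      (fun b : Fin m → ℕ+ =>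
        ∏ i, risingFactorial
            (u + ∑ l ∈ Finset.univ.filter (fun l => l < i), ((b l : ℕ):ℝ)) (b i)
          / risingFactorial
            (u + w i + ∑ l ∈ Finset.univ.filter (fun l => l < i), ((b l : ℕ):ℝ)) (b i))
      (risingFactorial u m / ∏ i, (w i - ((m:ℝ) - (i:ℕ)))) := by
  induction m generalizing u with
  | zero =>
    have he : (fun b : Fin 0 → ℕ+ =>
        ∏ i, risingFactorial
            (u + ∑ l ∈ Finset.univ.filter (fun l => l < i), ((b l : ℕ):ℝ)) (b i)
          / risingFactorial
            (u + w i + ∑ l ∈ Finset.univ.filter (fun l => l < i), ((b l : ℕ):ℝ)) (b i))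
        = fun _ => 1 := funext fun b => by simp
    rw [he]
    have := hasSum_unique (fun _ : Fin 0 → ℕ+ => (1:ℝ))
    simpa [rf_zero] using this
  | succ m ih =>
    -- notation
    set D' : ℝ := ∏ i : Fin m, (w i.succ - ((m:ℝ) - (i:ℕ))) with hD'
    have hw' : ∀ i : Fin m, (m:ℝ) - (i:ℕ) < w i.succ := by
      intro i
      have := hw i.succ
      rw [Fin.val_succ] at this
      push_cast at this ⊢
      linarith
    have hw0 : ((m:ℝ) + 1) < w 0 := by
      have := hw 0
      push_cast at this
      simpa using this
    have hD'pos : 0 < D' := Finset.prod_pos fun i _ => by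
      have h1 := hw' i
      have h2 : ((i:ℕ):ℝ) ≤ (m:ℝ) := by
        have := i.isLt
        exact_mod_cast le_of_lt this
      linarith
    set c : ℕ+ → ℝ := fun b0 => risingFactorial u b0 / risingFactorial (u + w 0) b0 with hc
    set H : ℕ+ → (Fin m → ℕ+) → ℝ := fun b0 t =>
        ∏ i : Fin m,
          risingFactorial
            ((u + (b0:ℕ)) + ∑ l ∈ Finset.univ.filter (fun l => l < i), ((t l : ℕ):ℝ)) (t i)
          / risingFactorial
            ((u + (b0:ℕ)) + w i.succ + ∑ l ∈ Finset.univ.filter (fun l => l < i), ((t l : ℕ):ℝ))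
            (t i) with hH
    have hub0 : ∀ b0 : ℕ+, (-1:ℝ) < u + (b0:ℕ) := by
      intro b0
      have : (1:ℝ) ≤ (b0:ℕ) := by exact_mod_cast b0.one_le
      linarith
    -- fiberwise sums of the tail
    have hfibH : ∀ b0 : ℕ+,
        HasSum (H b0) (risingFactorial (u + (b0:ℕ)) m / D') := by
      intro b0
      exact ih (u + (b0:ℕ)) (hub0 b0) (fun i => w i.succ) hw'
    have hHnn : ∀ b0 t, 0 ≤ H b0 t := by
      intro b0 t
      refine Finset.prod_nonneg fun i _ => ?_
      have h1 : (0:ℝ) < u + (b0:ℕ) := by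
        have : (1:ℝ) ≤ ((b0:ℕ):ℝ) := by exact_mod_cast b0.one_le
        linarith
      have hs : 0 ≤ ∑ l ∈ Finset.univ.filter (fun l => l < i), ((t l : ℕ):ℝ) :=
        Finset.sum_nonneg fun l _ => by positivity
      have h2 : (0:ℝ) < u + w i.succ := by
        have := hw' i
        have h3 : (0:ℝ) ≤ ((i:ℕ):ℝ) := by positivity
        have h4 : ((i:ℕ):ℝ) + 1 ≤ (m:ℝ) := by exact_mod_cast i.isLt
        linarith
      apply div_nonneg
      · exact rf_nonneg (by linarith) _
      · exact rf_nonneg (by linarith) _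
    -- tail sum value is nonneg
    have hvalnn : ∀ b0 : ℕ+, 0 ≤ risingFactorial (u + (b0:ℕ)) m / D' := by
      intro b0
      apply div_nonneg _ (le_of_lt hD'pos)
      apply rf_nonneg
      have : (1:ℝ) ≤ ((b0:ℕ):ℝ) := by exact_mod_cast b0.one_le
      linarith
    -- the outer sum
    have houter : HasSum (fun b0 : ℕ+ => c b0 * (risingFactorial (u + (b0:ℕ)) m / D'))
        (risingFactorial u (m+1) / ((w 0 - ((m:ℝ)+1)) * D')) := by
      have h := (hasSum_C_shift u (u + w 0) m hu (by linarith)).mul_right (1/D')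
      have e1 : risingFactorial u (m + 1) / (u + w 0 - u - (m:ℝ) - 1) * (1/D')
          = risingFactorial u (m+1) / ((w 0 - ((m:ℝ)+1)) * D') := by
        rw [mul_one_div, div_div]
        ring_nf
      rw [e1] at h
      refine h.congr_fun fun b0 => ?_
      simp only [hc]
      ring
    have hG : HasSum (fun p : ℕ+ × (Fin m → ℕ+) => c p.1 * H p.1 p.2)
        (risingFactorial u (m+1) / ((w 0 - ((m:ℝ)+1)) * D')) := by
      have hfib : ∀ b0 : ℕ+, HasSum (fun t => c b0 * H b0 t)
          (c b0 * (risingFactorial (u + (b0:ℕ)) m / D')) :=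
        fun b0 => (hfibH b0).mul_left (c b0)
      have habs : Summable (fun p : ℕ+ × (Fin m → ℕ+) => |c p.1 * H p.1 p.2|) := by
        rw [summable_prod_of_nonneg (fun p => abs_nonneg _)]
        constructor
        · intro b0
          exact ((hfib b0).summable).abs
        · have he : (fun b0 : ℕ+ => ∑' t, |c b0 * H b0 t|)
              = fun b0 => |c b0 * (risingFactorial (u + (b0:ℕ)) m / D')| := by
            funext b0
            have h1 : ∀ t, |c b0 * H b0 t| = |c b0| * H b0 t := by
              intro t
              rw [abs_mul, abs_of_nonneg (hHnn b0 t)]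
            have h2 : HasSum (fun t => |c b0| * H b0 t)
                (|c b0| * (risingFactorial (u + (b0:ℕ)) m / D')) :=
              (hfibH b0).mul_left _
            rw [tsum_congr h1, h2.tsum_eq, abs_mul, abs_of_nonneg (hvalnn b0)]
          rw [he]
          exact (houter.summable).abs
      have hsum : Summable (fun p : ℕ+ × (Fin m → ℕ+) => c p.1 * H p.1 p.2) :=
        summable_abs_iff.mp habs
      have ht := hsum.hasSum
      have : (∑' p : ℕ+ × (Fin m → ℕ+), c p.1 * H p.1 p.2)
          = risingFactorial u (m+1) / ((w 0 - ((m:ℝ)+1)) * D') := by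
        rw [Summable.tsum_prod' hsum (fun b0 => (hfib b0).summable)]
        calc (∑' (b0 : ℕ+), ∑' t, c b0 * H b0 t)
            = ∑' (b0 : ℕ+), c b0 * (risingFactorial (u + (b0:ℕ)) m / D') :=
              tsum_congr fun b0 => (hfib b0).tsum_eq
          _ = _ := houter.tsum_eq
      rwa [this] at ht
    -- transfer along the equivalence and identify terms
    rw [← Equiv.hasSum_iff (consEquiv m)]
    have hterm : ∀ p : ℕ+ × (Fin m → ℕ+),
        ((fun b : Fin (m+1) → ℕ+ =>
          ∏ i, risingFactorial
              (u + ∑ l ∈ Finset.univ.filter (fun l => l < i), ((b l : ℕ):ℝ)) (b i)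
            / risingFactorial
              (u + w i + ∑ l ∈ Finset.univ.filter (fun l => l < i), ((b l : ℕ):ℝ)) (b i))
          ∘ (consEquiv m)) p = c p.1 * H p.1 p.2 := by
      rintro ⟨b0, t⟩
      show (∏ i : Fin (m+1), risingFactorial
              (u + ∑ l ∈ Finset.univ.filter (fun l => l < i), (((Fin.cons b0 t : Fin (m+1) → ℕ+) l : ℕ):ℝ)) ((Fin.cons b0 t : Fin (m+1) → ℕ+) i)
            / risingFactorial
              (u + w i + ∑ l ∈ Finset.univ.filter (fun l => l < i), (((Fin.cons b0 t : Fin (m+1) → ℕ+) l : ℕ):ℝ)) ((Fin.cons b0 t : Fin (m+1) → ℕ+) i))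
          = c b0 * H b0 t
      rw [Fin.prod_univ_succ]
      congr 1
      · rw [hc]
        simp only [Fin.cons_zero]
        rw [sum_filter_lt_zero (fun l => (((Fin.cons b0 t : Fin (m+1) → ℕ+) l : ℕ):ℝ))]
        rw [add_zero, add_zero]
      · rw [hH]
        refine Finset.prod_congr rfl fun i _ => ?_
        have hsum : ∑ l ∈ Finset.univ.filter (fun l => l < i.succ),
            (((Fin.cons b0 t : Fin (m+1) → ℕ+) l : ℕ):ℝ)
            = (b0:ℕ) + ∑ l ∈ Finset.univ.filter (fun l => l < i), ((t l : ℕ):ℝ) := by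
          rw [sum_filter_lt_succ (fun l => (((Fin.cons b0 t : Fin (m+1) → ℕ+) l : ℕ):ℝ)) i]
          simp [Fin.cons_zero, Fin.cons_succ]
        rw [hsum]
        simp only [Fin.cons_succ]
        ring_nf
    have hfinal : HasSum ((fun b : Fin (m+1) → ℕ+ =>
          ∏ i, risingFactorial
              (u + ∑ l ∈ Finset.univ.filter (fun l => l < i), ((b l : ℕ):ℝ)) (b i)
            / risingFactorial
              (u + w i + ∑ l ∈ Finset.univ.filter (fun l => l < i), ((b l : ℕ):ℝ)) (b i))
          ∘ (consEquiv m)) (risingFactorial u (m+1) / ((w 0 - ((m:ℝ)+1)) * D')) :=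
      hG.congr_fun fun p => hterm p
    have hden : ∏ i : Fin (m+1), (w i - (((m+1:ℕ):ℝ) - ((i:ℕ):ℝ)))
        = (w 0 - ((m:ℝ)+1)) * D' := by
      rw [Fin.prod_univ_succ, hD']
      congr 1
      · simp
      · refine Finset.prod_congr rfl fun i _ => ?_
        rw [Fin.val_succ]
        push_cast
        ring
    rw [show ((m+1 : ℕ):ℝ) = ((m:ℝ)+1) from by push_cast; ring] at hden
    push_cast
    rw [hden]
    exact hfinal

end RFAux

/-- Backward-induction step: for `1 ≤ j ≤ k` and a nonnegative integer `B`
(playing the role of `b̄_{j-1}`), the iterated sum over `b_j,…,b_k ≥ 1` (equivalently, since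
all terms are nonnegative, the sum over the product space indexed by `i ∈ {j,…,k}`) of
`∏_{i=j}^k (α/d + B + b_j + ⋯ + b_{i-1})_{(b_i)} / ((a_i+α)/d + B + b_j + ⋯ + b_{i-1})_{(b_i)}`
converges and equals `(α/d + B)_{(k-j+1)} / ∏_{i=j}^k (a_i/d - (k+1-i))`. -/
theorem iterated_sum_risingFactorial_step (k : ℕ) (hk : 1 ≤ k) (d α : ℝ)
    (hd : d ∈ Set.Ioo (0 : ℝ) 1) (hα : -d < α)
    (a : ℕ → ℝ) (hapos : ∀ i ∈ Finset.Icc 1 k, 0 < a i)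
    (ha : ∀ i ∈ Finset.Icc 1 k, ((k : ℝ) + 1 - (i : ℕ)) * d < a i)
    (j : ℕ) (hj1 : 1 ≤ j) (hjk : j ≤ k) (B : ℕ) :
    HasSum
      (fun b : {i : ℕ // i ∈ Finset.Icc j k} → ℕ+ =>
        ∏ i ∈ (Finset.Icc j k).attach,
          risingFactorial
              (α / d + (B : ℝ) +
                ∑ l ∈ (Finset.Icc j k).attach.filter
                    (fun l : {i : ℕ // i ∈ Finset.Icc j k} => (l : ℕ) < (i : ℕ)),
                  ((b l : ℕ) : ℝ)) (b i) /
            risingFactorial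
              ((a (i : ℕ) + α) / d + (B : ℝ) +
                ∑ l ∈ (Finset.Icc j k).attach.filter
                    (fun l : {i : ℕ // i ∈ Finset.Icc j k} => (l : ℕ) < (i : ℕ)),
                  ((b l : ℕ) : ℝ)) (b i))
      (risingFactorial (α / d + (B : ℝ)) (k - j + 1) /
        ∏ i ∈ Finset.Icc j k, (a i / d - ((k : ℝ) + 1 - (i : ℕ)))) := by
  obtain ⟨hd0, hd1⟩ := hd
  set m : ℕ := k - j + 1 with hm
  set u : ℝ := α / d + (B : ℝ) with hu_def
  have hmcast : (m:ℝ) = (k:ℝ) - (j:ℝ) + 1 := by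
    rw [hm]
    push_cast [Nat.cast_sub hjk]
    ring
  have hu : (-1:ℝ) < u := by
    have h1 : (-1:ℝ) < α / d := by
      rw [lt_div_iff₀ hd0]
      linarith
    have h2 : (0:ℝ) ≤ (B:ℝ) := by positivity
    rw [hu_def]; linarith
  -- the equivalence Fin m ≃ subtype
  have hmem : ∀ p : Fin m, j + (p:ℕ) ∈ Finset.Icc j k := by
    intro p
    have := p.isLt
    rw [Finset.mem_Icc]
    omega
  let e : Fin m ≃ {i : ℕ // i ∈ Finset.Icc j k} :=
    { toFun := fun p => ⟨j + p, hmem p⟩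
      invFun := fun i => ⟨(i:ℕ) - j, by
        have := Finset.mem_Icc.mp i.2
        omega⟩
      left_inv := fun p => by
        ext
        simp
      right_inv := fun i => by
        have := Finset.mem_Icc.mp i.2
        ext
        simp
        omega }
  have he_coe : ∀ p : Fin m, ((e p : {i : ℕ // i ∈ Finset.Icc j k}) : ℕ) = j + p := fun p => rfl
  set w : Fin m → ℝ := fun p => a (j + p) / d with hw_def
  have hw : ∀ p : Fin m, (m:ℝ) - (p:ℕ) < w p := by
    intro p
    have hp := p.isLt
    have hmem1 : j + (p:ℕ) ∈ Finset.Icc 1 k := by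
      rw [Finset.mem_Icc]; omega
    have := ha (j + p) hmem1
    rw [hw_def]
    have hcast : ((j + (p:ℕ) : ℕ) : ℝ) = (j:ℝ) + (p:ℕ) := by push_cast; ring
    rw [hcast] at this
    rw [lt_div_iff₀ hd0]
    rw [hmcast]
    linarith
  have hmain := main_fin m u hu w hw
  let σ : (Fin m → ℕ+) ≃ ({i : ℕ // i ∈ Finset.Icc j k} → ℕ+) :=
    { toFun := fun g l => g (e.symm l)
      invFun := fun f p => f (e p)
      left_inv := fun g => funext fun p => by simp
      right_inv := fun f => funext fun l => by simp }
  rw [← Equiv.hasSum_iff σ]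
  -- value identification
  have hval : risingFactorial u m / ∏ i, (w i - ((m:ℝ) - (i:ℕ)))
      = risingFactorial (α / d + (B : ℝ)) (k - j + 1) /
        ∏ i ∈ Finset.Icc j k, (a i / d - ((k : ℝ) + 1 - (i : ℕ))) := by
    have hden : (∏ i, (w i - ((m:ℝ) - (i:ℕ))))
        = ∏ i ∈ Finset.Icc j k, (a i / d - ((k : ℝ) + 1 - (i : ℕ))) := by
      rw [Fin.prod_univ_eq_prod_range (fun n => a (j + n) / d - ((m:ℝ) - n)) m]
      refine Finset.prod_nbij' (fun n => j + n) (fun i => i - j) ?_ ?_ ?_ ?_ ?_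
      · intro n hn
        rw [Finset.mem_range] at hn
        rw [Finset.mem_Icc]
        omega
      · intro i hi
        rw [Finset.mem_Icc] at hi
        rw [Finset.mem_range]
        omega
      · intro n hn
        omega
      · intro i hi
        rw [Finset.mem_Icc] at hi
        omega
      · intro n hn
        rw [Finset.mem_range] at hn
        have : ((j + n : ℕ):ℝ) = (j:ℝ) + n := by push_cast; ring
        rw [this, hmcast]
        ring
    rw [hden]
  rw [hval] at hmain
  refine hmain.congr_fun fun g => ?_
  -- term identification
  have hterm : ∀ p : Fin m,
      (risingFactorial
          (α / d + (B : ℝ) +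
            ∑ l ∈ (Finset.Icc j k).attach.filter
                (fun l : {i : ℕ // i ∈ Finset.Icc j k} => (l : ℕ) < ((e p : {i : ℕ // i ∈ Finset.Icc j k}) : ℕ)),
              (((σ g) l : ℕ) : ℝ)) ((σ g) (e p)) /
        risingFactorial
          ((a ((e p : {i : ℕ // i ∈ Finset.Icc j k}) : ℕ) + α) / d + (B : ℝ) +
            ∑ l ∈ (Finset.Icc j k).attach.filter
                (fun l : {i : ℕ // i ∈ Finset.Icc j k} => (l : ℕ) < ((e p : {i : ℕ // i ∈ Finset.Icc j k}) : ℕ)),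
              (((σ g) l : ℕ) : ℝ)) ((σ g) (e p)))
      = risingFactorial
          (u + ∑ l ∈ Finset.univ.filter (fun l => l < p), ((g l : ℕ):ℝ)) (g p)
        / risingFactorial
          (u + w p + ∑ l ∈ Finset.univ.filter (fun l => l < p), ((g l : ℕ):ℝ)) (g p) := by
    intro p
    have hσg : (σ g) (e p) = g p := by simp [σ]
    have hS : ∑ l ∈ (Finset.Icc j k).attach.filter
          (fun l : {i : ℕ // i ∈ Finset.Icc j k} => (l : ℕ) < ((e p : {i : ℕ // i ∈ Finset.Icc j k}) : ℕ)),
        (((σ g) l : ℕ) : ℝ)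
        = ∑ l ∈ Finset.univ.filter (fun l => l < p), ((g l : ℕ):ℝ) := by
      rw [← Finset.univ_eq_attach, Finset.sum_filter, Finset.sum_filter]
      refine (Fintype.sum_equiv e _ _ fun q => ?_).symm
      have h1 : ((e q : {i : ℕ // i ∈ Finset.Icc j k}) : ℕ) = j + q := rfl
      have h2 : (σ g) (e q) = g q := by simp [σ]
      rw [h2, h1, he_coe p]
      simp only [Nat.add_lt_add_iff_left, Fin.lt_def]
    rw [hσg, hS]
    congr 2
    rw [he_coe p, hw_def, hu_def]
    have : ((j + (p:ℕ) : ℕ):ℝ) = (j:ℝ) + (p:ℕ) := by push_cast; ring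
    rw [add_div]
    ring
  calc ((fun b : {i : ℕ // i ∈ Finset.Icc j k} → ℕ+ =>
        ∏ i ∈ (Finset.Icc j k).attach,
          risingFactorial
              (α / d + (B : ℝ) +
                ∑ l ∈ (Finset.Icc j k).attach.filter
                    (fun l : {i : ℕ // i ∈ Finset.Icc j k} => (l : ℕ) < (i : ℕ)),
                  ((b l : ℕ) : ℝ)) (b i) /
            risingFactorial
              ((a (i : ℕ) + α) / d + (B : ℝ) +
                ∑ l ∈ (Finset.Icc j k).attach.filter
                    (fun l : {i : ℕ // i ∈ Finset.Icc j k} => (l : ℕ) < (i : ℕ)),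
                  ((b l : ℕ) : ℝ)) (b i)) ∘ σ) g
      = ∏ i ∈ (Finset.Icc j k).attach,
          risingFactorial
              (α / d + (B : ℝ) +
                ∑ l ∈ (Finset.Icc j k).attach.filter
                    (fun l : {i : ℕ // i ∈ Finset.Icc j k} => (l : ℕ) < (i : ℕ)),
                  (((σ g) l : ℕ) : ℝ)) ((σ g) i) /
            risingFactorial
              ((a (i : ℕ) + α) / d + (B : ℝ) +
                ∑ l ∈ (Finset.Icc j k).attach.filter
                    (fun l : {i : ℕ // i ∈ Finset.Icc j k} => (l : ℕ) < (i : ℕ)),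
                  (((σ g) l : ℕ) : ℝ)) ((σ g) i) := rfl
    _ = ∏ p : Fin m,
          (risingFactorial
            (u + ∑ l ∈ Finset.univ.filter (fun l => l < p), ((g l : ℕ):ℝ)) (g p)
          / risingFactorial
            (u + w p + ∑ l ∈ Finset.univ.filter (fun l => l < p), ((g l : ℕ):ℝ)) (g p)) := by
        rw [← Finset.univ_eq_attach]
        exact (Fintype.prod_equiv e _ _ fun p => (hterm p).symm).symm
    _ = _ := rfl
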